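/- Let $a \le t_0 < t_1 < \cdots < t_n \le b$ and let $p$ be a real polynomial of degree at most $n$ such that $p(t_i) = (-1)^i$ for all $i$ (or $p(t_i) = (-1)^{i+1}$ for all $i$). Then for every $x \notin [a,b]$, $|p(x)| \ge |T_n\left(\frac{2}{b-a}\left(x - \frac{a+b}{2}\right)\right)|$, where $T_n$ is the Chebyshev polynomial of the first kind of degree $n$. -/

import Mathlib

open Polynomial

lemma chebT_natDegree_le : ∀ n : ℕ, (Polynomial.Chebyshev.T ℝ n).natDegree ≤ n
  | 0 => by simp
  | 1 => by simp
  | (m+2) => by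
      have ih1 := chebT_natDegree_le (m+1)
      have ih2 := chebT_natDegree_le m
      have h2 : ((m + 2 : ℕ) : ℤ) = (m : ℤ) + 2 := by push_cast; ring
      rw [h2, Polynomial.Chebyshev.T_add_two]
      refine (Polynomial.natDegree_sub_le _ _).trans (max_le ?_ ?_)
      · refine Polynomial.natDegree_mul_le.trans ?_
        have h1 : (2 * Polynomial.X : ℝ[X]).natDegree ≤ 1 :=
          Polynomial.natDegree_mul_le.trans (by simp)
        have h3 : ((m : ℤ) + 1) = ((m+1 : ℕ) : ℤ) := by push_cast; ring
        rw [h3]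
        omega
      · omega

lemma chebT_abs_le (n : ℕ) (y : ℝ) (h1 : -1 ≤ y) (h2 : y ≤ 1) :
    |(Polynomial.Chebyshev.T ℝ n).eval y| ≤ 1 := by
  rw [← Real.cos_arccos h1 h2, Polynomial.Chebyshev.T_real_cos]
  exact Real.abs_cos_le_one _

theorem stmt_8 (n : ℕ) (a b : ℝ) (t : Fin (n + 1) → ℝ) (htmono : StrictMono t)
    (hta : a ≤ t 0) (htb : t (Fin.last n) ≤ b)
    (p : ℝ[X]) (hd : p.natDegree ≤ n)
    (hp : (∀ i : Fin (n + 1), p.eval (t i) = (-1 : ℝ) ^ (i : ℕ)) ∨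
          (∀ i : Fin (n + 1), p.eval (t i) = (-1 : ℝ) ^ ((i : ℕ) + 1))) :
    ∀ x : ℝ, x ∉ Set.Icc a b →
      |(Polynomial.Chebyshev.T ℝ n).eval (2 / (b - a) * (x - (a + b) / 2))| ≤ |p.eval x| := by
  have habs : ∀ i : Fin (n + 1), |p.eval (t i)| = 1 := by
    intro i
    rcases hp with h | h <;> rw [h i] <;> simp [abs_pow]
  have halt : ∀ i : Fin n, p.eval (t i.castSucc) * p.eval (t i.succ) = -1 := by
    intro i
    rcases hp with h | h <;>
      simp only [h, Fin.coe_castSucc, Fin.val_succ] <;>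
      rw [← pow_add] <;>
      exact Odd.neg_one_pow (Nat.odd_iff.2 (by omega))
  have hati : ∀ i, a ≤ t i := fun i => hta.trans (htmono.monotone (Fin.zero_le i))
  have htbi : ∀ i, t i ≤ b := fun i => (htmono.monotone (Fin.le_last i)).trans htb
  rcases Nat.eq_zero_or_pos n with rfl | hn
  · intro x _
    have hc := Polynomial.eq_C_of_natDegree_le_zero hd
    have h0 := habs 0
    rw [hc] at h0 ⊢
    simp only [Polynomial.eval_C] at h0 ⊢
    simpa using le_of_eq h0.symm
  · have hab : a < b := by
      have := htmono (show (0 : Fin (n+1)) < Fin.last n by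
        rw [Fin.lt_def]; simpa using hn)
      linarith [hta, htb]
    have hba : (0:ℝ) < b - a := by linarith
    have hst : ∀ i : Fin (n+1), -1 ≤ 2/(b-a) * (t i - (a+b)/2) ∧
        2/(b-a) * (t i - (a+b)/2) ≤ 1 := by
      intro i
      have h1 := hati i; have h2 := htbi i
      constructor
      · rw [div_mul_eq_mul_div, le_div_iff₀ hba]; linarith
      · rw [div_mul_eq_mul_div, div_le_iff₀ hba]; linarith
    intro x hx
    by_contra hlt
    push_neg at hlt
    have hTpos : 0 < |(Polynomial.Chebyshev.T ℝ n).eval (2/(b-a) * (x - (a+b)/2))| :=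
      lt_of_le_of_lt (abs_nonneg _) hlt
    have hTx : (Polynomial.Chebyshev.T ℝ n).eval (2/(b-a) * (x - (a+b)/2)) ≠ 0 :=
      abs_pos.1 hTpos
    set lam : ℝ := p.eval x / (Polynomial.Chebyshev.T ℝ n).eval (2/(b-a) * (x - (a+b)/2))
      with hlam_def
    have hlam : |lam| < 1 := by
      rw [hlam_def, abs_div]
      exact (div_lt_one hTpos).2 hlt
    set L : ℝ[X] := Polynomial.C (2/(b-a)) * (Polynomial.X - Polynomial.C ((a+b)/2)) with hL_def
    have hLeval : ∀ y : ℝ, L.eval y = 2/(b-a) * (y - (a+b)/2) := by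
      intro y; simp [hL_def]
    have hLdeg : L.natDegree ≤ 1 := by
      refine Polynomial.natDegree_mul_le.trans ?_
      simp
    set q : ℝ[X] := Polynomial.C lam * (Polynomial.Chebyshev.T ℝ n).comp L with hq_def
    have hqeval : ∀ y : ℝ,
        q.eval y = lam * (Polynomial.Chebyshev.T ℝ n).eval (2/(b-a) * (y - (a+b)/2)) := by
      intro y
      rw [hq_def]
      simp [Polynomial.eval_comp, hLeval]
    have hqdeg : q.natDegree ≤ n := by
      refine Polynomial.natDegree_mul_le.trans ?_
      have := Polynomial.natDegree_comp_le (p := Polynomial.Chebyshev.T ℝ n) (q := L)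
      have h1 := chebT_natDegree_le n
      simp only [Polynomial.natDegree_C, zero_add]
      calc ((Polynomial.Chebyshev.T ℝ n).comp L).natDegree
          ≤ (Polynomial.Chebyshev.T ℝ n).natDegree * L.natDegree := this
        _ ≤ n * 1 := Nat.mul_le_mul h1 hLdeg
        _ = n := by ring
    set r : ℝ[X] := p - q with hr_def
    have hrdeg : r.natDegree ≤ n :=
      (Polynomial.natDegree_sub_le _ _).trans (max_le hd hqdeg)
    have hrx : r.eval x = 0 := by
      rw [hr_def]
      simp only [Polynomial.eval_sub, hqeval x, hlam_def]
      rw [div_mul_cancel₀ _ hTx, sub_self]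
    have hqt : ∀ i : Fin (n+1), |q.eval (t i)| < 1 := by
      intro i
      rw [hqeval, abs_mul]
      calc |lam| * |(Polynomial.Chebyshev.T ℝ n).eval (2/(b-a) * (t i - (a+b)/2))|
          ≤ |lam| * 1 := by
            exact mul_le_mul_of_nonneg_left (chebT_abs_le n _ (hst i).1 (hst i).2) (abs_nonneg _)
        _ = |lam| := mul_one _
        _ < 1 := hlam
    have hrt_sign : ∀ i : Fin (n+1), 0 < r.eval (t i) * p.eval (t i) := by
      intro i
      have h1 := habs i
      have h2 := abs_lt.1 (hqt i)
      have h3 : r.eval (t i) = p.eval (t i) - q.eval (t i) := by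
        rw [hr_def]; simp
      rcases (abs_eq (by norm_num : (0:ℝ) ≤ 1)).1 h1 with h | h <;> rw [h3, h] <;> nlinarith
    have hroot : ∀ i : Fin n, ∃ c ∈ Set.Ioo (t i.castSucc) (t i.succ), r.eval c = 0 := by
      intro i
      have hs1 := hrt_sign i.castSucc
      have hs2 := hrt_sign i.succ
      have ha := halt i
      have hprod : r.eval (t i.castSucc) * r.eval (t i.succ) < 0 := by nlinarith
      have huv : t i.castSucc ≤ t i.succ :=
        le_of_lt (htmono Fin.castSucc_lt_succ)
      have hcont : ContinuousOn (fun y => r.eval y) (Set.Icc (t i.castSucc) (t i.succ)) :=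
        (Polynomial.continuous r).continuousOn
      rcases lt_or_ge (r.eval (t i.castSucc)) 0 with h | h
      · have h2 : 0 < r.eval (t i.succ) := by nlinarith
        obtain ⟨c, hc, hc0⟩ := intermediate_value_Ioo huv hcont (Set.mem_Ioo.2 ⟨h, h2⟩)
        exact ⟨c, hc, hc0⟩
      · have h1 : 0 < r.eval (t i.castSucc) := by
          rcases lt_or_eq_of_le h with h' | h'
          · exact h'
          · exfalso; rw [← h'] at hprod; simp at hprod
        have h2 : r.eval (t i.succ) < 0 := by nlinarith
        obtain ⟨c, hc, hc0⟩ := intermediate_value_Ioo' huv hcont (Set.mem_Ioo.2 ⟨h2, h1⟩)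
        exact ⟨c, hc, hc0⟩
    choose c hc hc0 using hroot
    have hcmono : StrictMono c := by
      intro i j hij
      calc c i < t i.succ := (hc i).2
        _ ≤ t j.castSucc := htmono.monotone (by
            rw [Fin.le_def]
            simp only [Fin.val_succ, Fin.coe_castSucc]
            exact hij)
        _ < c j := (hc j).1
    have hxab : x < a ∨ b < x := by
      by_contra h
      push_neg at h
      exact hx ⟨h.1, h.2⟩
    have hxc : ∀ i : Fin n, x ≠ c i := by
      intro i h
      have h1 := (hc i).1
      have h2 := (hc i).2
      have h3 := hati i.castSucc
      have h4 := htbi i.succ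
      rcases hxab with h' | h' <;> linarith [h ▸ h1, h ▸ h2]
    have hr0 : r = 0 := by
      apply Polynomial.eq_zero_of_natDegree_lt_card_of_eval_eq_zero' r
        (insert x (Finset.image c Finset.univ))
      · intro y hy
        rcases Finset.mem_insert.1 hy with rfl | hy
        · exact hrx
        · obtain ⟨i, _, rfl⟩ := Finset.mem_image.1 hy
          exact hc0 i
      · rw [Finset.card_insert_of_notMem, Finset.card_image_of_injective _ hcmono.injective,
          Finset.card_univ, Fintype.card_fin]
        · omega
        · intro hmem
          obtain ⟨i, _, hi⟩ := Finset.mem_image.1 hmem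
          exact hxc i hi.symm
    have hpq : p = q := by
      have := sub_eq_zero.1 hr0
      exact this
    have h1 := habs 0
    have h2 := hqt 0
    rw [hpq] at h1
    linarith
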